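/- For every integer m ≥ 1, the identity ∑_{i=3}^{m+2} C(m+2, i) · C(i−1, 2) = 2^{m−1}·(m² − m + 2) − 1 holds, where C(n,k) denotes the binomial coefficient. -/

import Mathlib

open Finset

lemma aux_sum (N : ℕ) :
    ∑ j ∈ range (N + 1), Nat.choose (N + 2) (j + 2) * Nat.choose (j + 2) 2 =
      Nat.choose (N + 2) 2 * 2 ^ N := by
  have h : ∀ j ∈ range (N + 1),
      Nat.choose (N + 2) (j + 2) * Nat.choose (j + 2) 2 =
        Nat.choose (N + 2) 2 * Nat.choose N j := by
    intro j hj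
    have hjN : j + 2 ≤ N + 2 := by
      have := Finset.mem_range.mp hj; omega
    have := Nat.choose_mul (n := N + 2) (k := j + 2) (s := 2) (by omega)
    simpa using this
  rw [Finset.sum_congr rfl h, ← Finset.mul_sum, Nat.sum_range_choose]

lemma key (n : ℕ) :
    (∑ j ∈ range (n + 1), Nat.choose (n + 3) (j + 3) * Nat.choose (j + 2) 2) + 1 =
      2 ^ n * (n ^ 2 + n + 2) := by
  induction n with
  | zero => simp
  | succ n ih =>
    have pascal : ∀ j : ℕ, Nat.choose (n + 4) (j + 3) =
        Nat.choose (n + 3) (j + 3) + Nat.choose (n + 3) (j + 2) := fun j =>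
      (Nat.choose_succ_succ (n + 3) (j + 2)).trans (Nat.add_comm _ _)
    have haux : ∑ j ∈ range (n + 2), Nat.choose (n + 3) (j + 2) * Nat.choose (j + 2) 2 =
        Nat.choose (n + 3) 2 * 2 ^ (n + 1) := aux_sum (n + 1)
    have hc : Nat.choose (n + 3) 2 * 2 = (n + 3) * (n + 2) := by
      rw [Nat.choose_two_right]
      show (n + 3) * (n + 2) / 2 * 2 = (n + 3) * (n + 2)
      refine Nat.div_mul_cancel ?_
      rw [mul_comm]
      exact (Nat.even_mul_succ_self (n + 2)).two_dvd
    calc (∑ j ∈ range (n + 2), Nat.choose (n + 4) (j + 3) * Nat.choose (j + 2) 2) + 1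
        = (∑ j ∈ range (n + 2), (Nat.choose (n + 3) (j + 3) * Nat.choose (j + 2) 2
            + Nat.choose (n + 3) (j + 2) * Nat.choose (j + 2) 2)) + 1 := by
          congr 1
          refine Finset.sum_congr rfl fun j _ => ?_
          rw [pascal j, Nat.add_mul]
      _ = (∑ j ∈ range (n + 2), Nat.choose (n + 3) (j + 3) * Nat.choose (j + 2) 2)
            + (∑ j ∈ range (n + 2), Nat.choose (n + 3) (j + 2) * Nat.choose (j + 2) 2) + 1 := by
          rw [Finset.sum_add_distrib]
      _ = (∑ j ∈ range (n + 1), Nat.choose (n + 3) (j + 3) * Nat.choose (j + 2) 2)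
            + 1 + Nat.choose (n + 3) 2 * 2 ^ (n + 1) := by
          rw [Finset.sum_range_succ, Nat.choose_eq_zero_of_lt (by omega), Nat.zero_mul,
            Nat.add_zero, haux]
          omega
      _ = 2 ^ n * (n ^ 2 + n + 2) + Nat.choose (n + 3) 2 * 2 ^ (n + 1) := by rw [ih]
      _ = 2 ^ n * (n ^ 2 + n + 2) + ((n + 3) * (n + 2)) * 2 ^ n := by
          rw [pow_succ, ← hc]; ring
      _ = 2 ^ (n + 1) * ((n + 1) ^ 2 + (n + 1) + 2) := by rw [pow_succ]; ring

theorem bjorner_welker_identity (m : ℕ) (hm : 1 ≤ m) :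
    ∑ i ∈ Finset.Icc 3 (m + 2), Nat.choose (m + 2) i * Nat.choose (i - 1) 2 =
      2 ^ (m - 1) * (m ^ 2 - m + 2) - 1 := by
  obtain ⟨n, rfl⟩ := Nat.exists_eq_add_of_le hm
  have hset : Finset.Icc 3 (1 + n + 2) = Finset.map
      ⟨fun j => j + 3, add_left_injective 3⟩ (Finset.range (n + 1)) := by
    ext x
    simp only [Finset.mem_map, Finset.mem_range, Finset.mem_Icc, Function.Embedding.coeFn_mk]
    constructor
    · rintro ⟨h1, h2⟩; exact ⟨x - 3, by omega, by omega⟩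
    · rintro ⟨a, ha, rfl⟩; omega
  rw [hset, Finset.sum_map]
  simp only [Function.Embedding.coeFn_mk]
  have hk := key n
  have hlhs : ∑ j ∈ range (n + 1), Nat.choose (1 + n + 2) (j + 3) * Nat.choose (j + 3 - 1) 2
      = ∑ j ∈ range (n + 1), Nat.choose (n + 3) (j + 3) * Nat.choose (j + 2) 2 := by
    refine Finset.sum_congr rfl fun j _ => ?_
    congr 1
    · congr 1; omega
  rw [hlhs]
  have h1 : (1 + n) ^ 2 - (1 + n) + 2 = n ^ 2 + n + 2 := by
    have : (1 + n) ^ 2 = (1 + n) + (n ^ 2 + n) := by ring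
    omega
  have h2 : 1 + n - 1 = n := by omega
  rw [h1, h2]
  omega
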